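/- If a bilateral contract takes a transition under an action of A via one of the non-failure rules [IntExt], [IntInt] or [ExtExt], the resulting contract of B begins with a rdy prefix, and at most one rdy prefix occurs in the resulting bilateral contract; in particular, if γ —→ A says rdy a.c | B says d, then d is rdy-free. -/

import Mathlib

/-! Contracts à la Castagna et al., as in "Contracts in distributed systems".
Atoms are integers; the involution `co` is negation, the success atom `e` is 0
(so that `co e = e`). Contracts use de Bruijn indices for recursion variables. -/

abbrev Atom := ℤ

def co (a : Atom) : Atom := -a

def eAtom : Atom := 0

inductive Contract : Type where
  | intSum : List (Atom × Contract) → Contract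
  | extSum : List (Atom × Contract) → Contract
  | rdy    : Atom → Contract → Contract
  | recur  : Contract → Contract
  | var    : ℕ → Contract

namespace Contract

/-- The failure contract `0` (empty internal and external sums are identified
by structural congruence). -/
def isZero (c : Contract) : Prop := c = intSum [] ∨ c = extSum []

-- Substitution of a (closed) contract `u` for de Bruijn variable `k`.
mutual
def csubst (u : Contract) : ℕ → Contract → Contract
  | k, var n => if n = k then u else var n
  | k, recur c => recur (csubst u (k+1) c)
  | k, rdy a c => rdy a (csubst u k c)
  | k, intSum l => intSum (csubstL u k l)
  | k, extSum l => extSum (csubstL u k l)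
def csubstL (u : Contract) : ℕ → List (Atom × Contract) → List (Atom × Contract)
  | _, [] => []
  | k, (a, c) :: t => (a, csubst u k c) :: csubstL u k t
end

/-- The success contract `E = rec X. e ; X`. -/
def Econ : Contract := recur (intSum [(eAtom, var 0)])

/-- `var n` occurs unguarded (not under any sum / rdy prefix). -/
inductive UnguardedVar : ℕ → Contract → Prop where
  | var : UnguardedVar n (var n)
  | recur : UnguardedVar (n+1) c → UnguardedVar n (recur c)

/-- Well-formed contracts with free variables below `k`: atoms in each sum are
pairwise distinct, recursion is guarded. -/
inductive WF : ℕ → Contract → Prop where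
  | intSum : (l.map Prod.fst).Nodup → (∀ p ∈ l, WF k p.2) → WF k (intSum l)
  | extSum : (l.map Prod.fst).Nodup → (∀ p ∈ l, WF k p.2) → WF k (extSum l)
  | rdy : WF k c → WF k (rdy a c)
  | recur : ¬ UnguardedVar 0 c → WF (k+1) c → WF k (recur c)
  | var : n < k → WF k (var n)

/-- `rdy`-free contracts. -/
inductive RdyFree : Contract → Prop where
  | intSum : (∀ p ∈ l, RdyFree p.2) → RdyFree (intSum l)
  | extSum : (∀ p ∈ l, RdyFree p.2) → RdyFree (extSum l)
  | recur : RdyFree c → RdyFree (recur c)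
  | var : RdyFree (var n)

/-- `0`-free contracts: no empty sum occurs. -/
inductive ZeroFree : Contract → Prop where
  | intSum : l ≠ [] → (∀ p ∈ l, ZeroFree p.2) → ZeroFree (intSum l)
  | extSum : l ≠ [] → (∀ p ∈ l, ZeroFree p.2) → ZeroFree (extSum l)
  | rdy : ZeroFree c → ZeroFree (rdy a c)
  | recur : ZeroFree c → ZeroFree (recur c)
  | var : ZeroFree (var n)

/-- A `rdy` prefix may occur at top level only. -/
def TopRdy (c : Contract) : Prop :=
  RdyFree c ∨ ∃ a c', c = rdy a c' ∧ RdyFree c'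

end Contract

open Contract

/-- One step of participant `A` (first component) in a bilateral contract
`A says c | B says d`: rules [IntExt], [IntInt], [ExtExt], [Rdy] and the
failure rules, plus unfolding of recursion (structural congruence). -/
inductive StepA : Contract → Contract → Atom → Contract → Contract → Prop where
  | intExt : (a, c') ∈ l → (co a, d') ∈ m →
      StepA (.intSum l) (.extSum m) a c' (.rdy (co a) d')
  | intInt : (a, c') ∈ l →
      StepA (.intSum l) (.intSum [(co a, d')]) a c' (.rdy (co a) d')
  | extExt : (a, c') ∈ l → (co a, d') ∈ m →
      StepA (.extSum l) (.extSum m) a c' (.rdy (co a) d')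
  | rdy : StepA (.rdy a c) d a c d
  | intExtFail : (a, c') ∈ l → (∀ q ∈ m, co q.1 ≠ a) →
      StepA (.intSum l) (.extSum m) a Econ (.intSum [])
  | intIntFail : (a, c') ∈ l → ¬ (m ≠ [] ∧ ∀ q ∈ m, co q.1 = a) →
      StepA (.intSum l) (.intSum m) a Econ (.intSum [])
  | extExtFail : (a, c') ∈ l → (∀ p ∈ l, ∀ q ∈ m, p.1 ≠ co q.1) →
      StepA (.extSum l) (.extSum m) a Econ (.intSum [])
  | recL : StepA (csubst (.recur c) 0 c) d a c' d' → StepA (.recur c) d a c' d'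
  | recR : StepA c (csubst (.recur d) 0 d) a c' d' → StepA c (.recur d) a c' d'

/-- The two participants of a bilateral contract. -/
inductive Ptp : Type where
  | A | B
deriving DecidableEq

inductive CLabel : Type where
  | says : Ptp → Atom → CLabel
deriving DecidableEq

/-- Labelled transitions of bilateral contracts. -/
inductive Step : Contract × Contract → CLabel → Contract × Contract → Prop where
  | left  : StepA c d a c' d' → Step (c, d) (.says .A a) (c', d')
  | right : StepA d c a d' c' → Step (c, d) (.says .B a) (c', d')

/-- Participant `p` is culpable in the bilateral contract `γ`. -/
def frown (p : Ptp) (γ : Contract × Contract) : Prop :=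
  isZero (match p with | .A => γ.1 | .B => γ.2) ∨
  ((¬ ∃ γ', Step γ (.says p eAtom) γ') ∧ (∃ a γ', Step γ (.says p a) γ'))

/-- Tokens occurring in ready sets: atoms, or the `rdy` marker. -/
inductive RToken : Type where
  | atom : Atom → RToken
  | rdy  : RToken
deriving DecidableEq

def coT : RToken → RToken
  | .atom a => .atom (co a)
  | .rdy => .rdy

/-- Ready sets. -/
def RS : Contract → Set (Set RToken)
  | .intSum [] => {∅}
  | .intSum (p :: l) => {X | ∃ q ∈ p :: l, X = {RToken.atom q.1}}
  | .extSum [] => {∅}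
  | .extSum (p :: l) => {X | X = {t | ∃ q ∈ p :: l, t = RToken.atom q.1}}
  | .rdy _ _ => {{RToken.rdy}}
  | .recur c => RS c
  | .var _ => {∅}

/-- The defining clauses of compliance. -/
def ComplianceRel (R : Contract → Contract → Prop) : Prop :=
  ∀ c d, R c d →
    (∀ X ∈ RS c, ∀ Y ∈ RS d,
        (∃ t ∈ X, coT t ∈ Y) ∨ RToken.rdy ∈ (X ∪ Y) \ (X ∩ Y)) ∧
    (∀ μ c' d', Step (c, d) μ (c', d') → R c' d')

/-- Compliance: the largest relation satisfying `CompRel`. -/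
def Compliant (c d : Contract) : Prop := ∃ R, ComplianceRel R ∧ R c d

/-- A contract succeeds. -/
def Succeeds (c : Contract) : Prop :=
  (∃ l, c = .intSum l ∧ (eAtom, Econ) ∈ l) ∨
  (∃ l, c = .extSum l ∧ (eAtom, Econ) ∈ l) ∨
  c = .rdy eAtom Econ

/-- Multi-step reduction of bilateral contracts. -/
def Reduces : Contract × Contract → Contract × Contract → Prop :=
  Relation.ReflTransGen (fun γ γ' => ∃ μ, Step γ μ γ')

/-- Bilateral well-formedness: `rdy` at top level only and at most one `rdy`. -/
def BCWF (γ : Contract × Contract) : Prop :=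
  TopRdy γ.1 ∧ TopRdy γ.2 ∧ (RdyFree γ.1 ∨ RdyFree γ.2)

lemma csubstL_eq (u : Contract) (k : ℕ) (l : List (Atom × Contract)) :
    csubstL u k l = l.map fun p => (p.1, csubst u k p.2) := by
  induction l with
  | nil => simp [csubstL]
  | cons h t ih => simp [csubstL, ih]

lemma rdyFree_csubst {u c : Contract} (hu : RdyFree u) (hc : RdyFree c) :
    ∀ k, RdyFree (csubst u k c) := by
  induction hc with
  | @intSum l h ih =>
      intro k
      rw [csubst, csubstL_eq]
      refine RdyFree.intSum ?_
      rintro p hp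
      simp only [List.mem_map] at hp
      obtain ⟨q, hq, rfl⟩ := hp
      exact ih q hq k
  | @extSum l h ih =>
      intro k
      rw [csubst, csubstL_eq]
      refine RdyFree.extSum ?_
      rintro p hp
      simp only [List.mem_map] at hp
      obtain ⟨q, hq, rfl⟩ := hp
      exact ih q hq k
  | recur h ih => intro k; exact RdyFree.recur (ih (k+1))
  | var =>
      intro k
      rw [csubst]
      split
      · exact hu
      · exact RdyFree.var

lemma rdyFree_Econ : RdyFree Econ := by
  refine RdyFree.recur (RdyFree.intSum ?_)
  rintro p hp
  simp at hp
  rw [hp]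
  exact RdyFree.var

lemma topRdy_intSum {l : List (Atom × Contract)} (h : TopRdy (Contract.intSum l)) :
    RdyFree (Contract.intSum l) := by
  rcases h with h | ⟨a, c', heq, _⟩
  · exact h
  · exact absurd heq (by simp)

lemma topRdy_extSum {l : List (Atom × Contract)} (h : TopRdy (Contract.extSum l)) :
    RdyFree (Contract.extSum l) := by
  rcases h with h | ⟨a, c', heq, _⟩
  · exact h
  · exact absurd heq (by simp)

lemma topRdy_recur {c : Contract} (h : TopRdy (Contract.recur c)) : RdyFree c := by
  rcases h with h | ⟨a, c', heq, _⟩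
  · cases h; assumption
  · exact absurd heq (by simp)

lemma key {c d : Contract} {a : Atom} {c' d' : Contract}
    (h : StepA c d a c' d') (hc : TopRdy c) (hd : TopRdy d) :
    RdyFree c' ∧ TopRdy d' := by
  induction h with
  | @intExt a l c' m d' h1 h2 =>
      have hcf := topRdy_intSum hc
      have hdf := topRdy_extSum hd
      cases hcf with | intSum hcf =>
      cases hdf with | extSum hdf =>
      exact ⟨hcf _ h1, Or.inr ⟨_, _, rfl, hdf _ h2⟩⟩
  | @intInt a c' l d' h1 =>
      have hcf := topRdy_intSum hc
      have hdf := topRdy_intSum hd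
      cases hcf with | intSum hcf =>
      cases hdf with | intSum hdf =>
      exact ⟨hcf _ h1, Or.inr ⟨_, _, rfl, hdf _ List.mem_cons_self⟩⟩
  | @extExt a l c' m d' h1 h2 =>
      have hcf := topRdy_extSum hc
      have hdf := topRdy_extSum hd
      cases hcf with | extSum hcf =>
      cases hdf with | extSum hdf =>
      exact ⟨hcf _ h1, Or.inr ⟨_, _, rfl, hdf _ h2⟩⟩
  | @rdy a c0 d0 =>
      rcases hc with h | ⟨a0, c1, heq, hf⟩
      · nomatch h
      · cases heq
        exact ⟨hf, hd⟩
  | intExtFail h1 h2 =>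
      exact ⟨rdyFree_Econ, Or.inl (RdyFree.intSum (by simp))⟩
  | intIntFail h1 h2 =>
      exact ⟨rdyFree_Econ, Or.inl (RdyFree.intSum (by simp))⟩
  | extExtFail h1 h2 =>
      exact ⟨rdyFree_Econ, Or.inl (RdyFree.intSum (by simp))⟩
  | @recL c0 d0 a0 c1 d1 h ih =>
      have hcf : RdyFree c0 := topRdy_recur hc
      exact ih (Or.inl (rdyFree_csubst (RdyFree.recur hcf) hcf 0)) hd
  | @recR c0 d0 a0 c1 d1 h ih =>
      have hdf : RdyFree d0 := topRdy_recur hd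
      exact ih hc (Or.inl (rdyFree_csubst (RdyFree.recur hdf) hdf 0))

lemma rdyFree_not_rdy {a : Atom} {c : Contract} (h : RdyFree (Contract.rdy a c)) :
    False := by nomatch h

/-- transitions preserve the invariant that at most one `rdy` prefix
occurs (at top level); in particular, if `γ ⟶ A says rdy a.c' | B says d'`, then
`d'` is `rdy`-free (and symmetrically). -/
theorem stmt7 (c d : Contract) (hwf : BCWF (c, d)) (μ : CLabel)
    (γ' : Contract × Contract) (hstep : Step (c, d) μ γ') :
    BCWF γ' ∧
    (∀ a c' d', γ' = (.rdy a c', d') → Contract.RdyFree d') ∧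
    (∀ a c' d', γ' = (c', .rdy a d') → Contract.RdyFree c') := by
  obtain ⟨hc1, hc2, _⟩ := hwf
  cases hstep with
  | @left _ _ a c' d' h =>
      obtain ⟨hcf, hdt⟩ := key h hc1 hc2
      refine ⟨⟨Or.inl hcf, hdt, Or.inl hcf⟩, ?_, ?_⟩
      · rintro a0 c0 d0 ⟨⟩
        exact absurd hcf rdyFree_not_rdy
      · rintro a0 c0 d0 ⟨⟩
        exact hcf
  | @right _ _ a d' c' h =>
      obtain ⟨hdf, hct⟩ := key h hc2 hc1
      refine ⟨⟨hct, Or.inl hdf, Or.inr hdf⟩, ?_, ?_⟩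
      · rintro a0 c0 d0 ⟨⟩
        exact hdf
      · rintro a0 c0 d0 ⟨⟩
        exact absurd hdf rdyFree_not_rdy
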